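/- Let V ∈ C²(ℝ) satisfy: V(x) − E has exactly two simple zeros x₋ < x₊ (V'(x₋) < 0 < V'(x₊)) and (V(x)−E)/((x−x₋)(x−x₊)) is positive on ℝ. Then the phase-space volume function J(λ) = 2∫_{x₋(λ)}^{x₊(λ)} √(λ − V(x)) dx, defined for λ in a sufficiently small neighborhood of E (with x₋(λ), x₊(λ) the turning points at energy λ), is differentiable at λ ∈ (E₋,E₊) with J'(λ) = ∫_{x₋(λ)}^{x₊(λ)} dx/√(λ − V(x)). -/

import Mathlib

open Real MeasureTheory Set

private lemma sqrt_abs_sub_le {u v : ℝ} (hv : 0 < v) :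
    |Real.sqrt u - Real.sqrt v| ≤ |u - v| / Real.sqrt v := by
  have hsv : 0 < Real.sqrt v := Real.sqrt_pos.2 hv
  rcases le_or_gt 0 u with hu | hu
  · have h1 : Real.sqrt u ^ 2 = u := Real.sq_sqrt hu
    have h2 : Real.sqrt v ^ 2 = v := Real.sq_sqrt hv.le
    have hk : (Real.sqrt u - Real.sqrt v) * (Real.sqrt u + Real.sqrt v) = u - v := by
      nlinarith
    rw [le_div_iff₀ hsv]
    have hsum : 0 ≤ Real.sqrt u + Real.sqrt v := by positivity
    calc |Real.sqrt u - Real.sqrt v| * Real.sqrt v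
        ≤ |Real.sqrt u - Real.sqrt v| * (Real.sqrt u + Real.sqrt v) := by
          apply mul_le_mul_of_nonneg_left _ (abs_nonneg _)
          nlinarith [Real.sqrt_nonneg u]
      _ = |u - v| := by
          rw [← abs_of_nonneg hsum, ← abs_mul, hk]
  · have hu0 : Real.sqrt u = 0 := Real.sqrt_eq_zero'.2 hu.le
    rw [hu0, zero_sub, abs_neg, abs_of_nonneg (Real.sqrt_nonneg v), le_div_iff₀ hsv]
    have : Real.sqrt v * Real.sqrt v = v := Real.mul_self_sqrt hv.le
    rw [this]
    have : |u - v| = v - u := by rw [abs_of_nonpos (by linarith)]; ring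
    linarith

private lemma sqrt_slope_bound {a h : ℝ} (ha : a ≠ 0) :
    |Real.sqrt (a + h) - Real.sqrt a| ≤ |h| / Real.sqrt |a| := by
  rcases ha.lt_or_gt with halt | hagt
  · have habs : |a| = -a := abs_of_neg halt
    have hsa : Real.sqrt a = 0 := Real.sqrt_eq_zero'.2 halt.le
    rcases le_or_gt (a + h) 0 with hah | hah
    · rw [hsa, Real.sqrt_eq_zero'.2 hah]
      simp [div_nonneg, abs_nonneg, Real.sqrt_nonneg]
    · have hh : 0 < h := by linarith
      rw [hsa, sub_zero, abs_of_nonneg (Real.sqrt_nonneg _), habs,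
        le_div_iff₀ (Real.sqrt_pos.2 (by linarith : (0:ℝ) < -a)), abs_of_pos hh,
        ← Real.sqrt_mul hah.le]
      have key : (a + h) * (-a) ≤ (h / 2) ^ 2 := by nlinarith [sq_nonneg (2*a + h)]
      calc Real.sqrt ((a + h) * (-a)) ≤ Real.sqrt ((h / 2) ^ 2) := Real.sqrt_le_sqrt key
        _ = h / 2 := by rw [Real.sqrt_sq (by linarith)]
        _ ≤ h := by linarith
  · have habs : |a| = a := abs_of_pos hagt
    have := sqrt_abs_sub_le (u := a + h) (v := a) hagt
    simpa [habs] using this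

private lemma rpow_neg_half_of_neg {t : ℝ} (ht : t < 0) : t ^ (-(1/2) : ℝ) = 0 := by
  rw [Real.rpow_def_of_neg ht]
  have : Real.cos (-(1/2) * π) = 0 := by
    rw [show (-(1/2) * π : ℝ) = -(π/2) by ring, Real.cos_neg, Real.cos_pi_div_two]
  rw [this, mul_zero]

private lemma inv_sqrt_eq_rpow {t : ℝ} (ht : 0 ≤ t) : (Real.sqrt t)⁻¹ = t ^ (-(1/2) : ℝ) := by
  rw [Real.rpow_neg ht, Real.sqrt_eq_rpow]

private lemma rpow_neg_half_nonneg (t : ℝ) : 0 ≤ t ^ (-(1/2) : ℝ) := by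
  rcases lt_or_ge t 0 with h | h
  · rw [rpow_neg_half_of_neg h]
  · positivity

private lemma integrable_inv_sqrt_abs (a c d : ℝ) :
    IntervalIntegrable (fun x => (Real.sqrt |x - a|)⁻¹) volume c d := by
  have hf : IntervalIntegrable (fun x => (x - a) ^ (-(1/2) : ℝ)) volume c d := by
    have h := (intervalIntegral.intervalIntegrable_rpow' (a := c - a) (b := d - a)
      (r := -(1/2)) (by norm_num)).comp_sub_right a
    simpa using h
  have hg : IntervalIntegrable (fun x => (a - x) ^ (-(1/2) : ℝ)) volume c d := by
    have h := (intervalIntegral.intervalIntegrable_rpow' (a := a - c) (b := a - d)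
      (r := -(1/2)) (by norm_num)).comp_sub_left a
    simpa using h
  apply (hf.add hg).mono_fun
  · apply Measurable.aestronglyMeasurable
    exact ((Real.continuous_sqrt.comp (continuous_abs.comp (continuous_sub_right a))).measurable).inv
  · apply Filter.Eventually.of_forall
    intro x
    have hb : 0 ≤ (x - a) ^ (-(1/2):ℝ) + (a - x) ^ (-(1/2):ℝ) :=
      add_nonneg (rpow_neg_half_nonneg _) (rpow_neg_half_nonneg _)
    simp only [Real.norm_eq_abs]
    rw [abs_of_nonneg hb, abs_of_nonneg (inv_nonneg.2 (Real.sqrt_nonneg _))]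
    rcases lt_trichotomy x a with h | h | h
    · have h1 : |x - a| = a - x := by rw [abs_of_neg (by linarith)]; ring
      rw [h1, inv_sqrt_eq_rpow (by linarith : (0:ℝ) ≤ a - x)]
      have : (x - a) ^ (-(1/2):ℝ) = 0 := rpow_neg_half_of_neg (by linarith)
      linarith [rpow_neg_half_nonneg (a - x)]
    · simp [h]
    · have h1 : |x - a| = x - a := abs_of_pos (by linarith)
      rw [h1, inv_sqrt_eq_rpow (by linarith : (0:ℝ) ≤ x - a)]
      have : (a - x) ^ (-(1/2):ℝ) = 0 := rpow_neg_half_of_neg (by linarith)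
      linarith [rpow_neg_half_nonneg (x - a)]

private lemma mvt_abs (V : ℝ → ℝ) (hd : ∀ t : ℝ, HasDerivAt V (deriv V t) t) {p q c : ℝ}
    (hder : ∀ t ∈ Set.Icc p q, c ≤ |deriv V t|) :
    ∀ x ∈ Set.Icc p q, ∀ y ∈ Set.Icc p q, c * |x - y| ≤ |V x - V y| := by
  have key : ∀ x ∈ Set.Icc p q, ∀ y ∈ Set.Icc p q, x < y → c * |x - y| ≤ |V x - V y| := by
    intro x hx y hy hxy
    obtain ⟨ξ, hξ, hslope⟩ := exists_hasDerivAt_eq_slope V (deriv V) hxy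
      (fun t _ => (hd t).continuousAt.continuousWithinAt) (fun t _ => hd t)
    have hξmem : ξ ∈ Set.Icc p q := ⟨le_trans hx.1 hξ.1.le, le_trans hξ.2.le hy.2⟩
    have h1 : V y - V x = deriv V ξ * (y - x) := by
      rw [hslope, div_mul_cancel₀]
      exact sub_ne_zero.2 hxy.ne'
    have h2 : |V x - V y| = |deriv V ξ| * |x - y| := by
      rw [abs_sub_comm, h1, abs_mul, abs_sub_comm y x]
    rw [h2]
    exact mul_le_mul_of_nonneg_right (hder ξ hξmem) (abs_nonneg _)
  intro x hx y hy
  rcases lt_trichotomy x y with h | h | h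
  · exact key x hx y hy h
  · simp [h]
  · have := key y hy x hx h
    rwa [abs_sub_comm, abs_sub_comm (V y)] at this

private lemma inv_pack (V : ℝ → ℝ) (hVc : Continuous V) {p q : ℝ} (hpq : p ≤ q)
    (hanti : StrictAntiOn V (Set.Icc p q)) :
    ∃ f : ℝ → ℝ,
      (∀ lam ∈ Set.Ioo (V q) (V p), f lam ∈ Set.Ioo p q ∧ V (f lam) = lam) ∧
      ContinuousOn f (Set.Ioo (V q) (V p)) ∧
      (∀ lam ∈ Set.Ioo (V q) (V p), ∀ x ∈ Set.Icc p q, V x = lam → x = f lam) := by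
  classical
  set f : ℝ → ℝ := fun lam =>
    if h : ∃ x, x ∈ Set.Icc p q ∧ V x = lam then h.choose else p with hf
  have hval : ∀ lam ∈ Set.Ioo (V q) (V p), f lam ∈ Set.Ioo p q ∧ V (f lam) = lam := by
    intro lam hlam
    have hex : ∃ x, x ∈ Set.Icc p q ∧ V x = lam := by
      obtain ⟨x, hx, hVx⟩ := intermediate_value_Icc' hpq hVc.continuousOn
        (mem_of_mem_of_subset hlam Set.Ioo_subset_Icc_self)
      exact ⟨x, hx, hVx⟩
    simp only [hf, dif_pos hex]
    obtain ⟨hmem, heq⟩ := hex.choose_spec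
    refine ⟨⟨?_, ?_⟩, heq⟩
    · rcases eq_or_lt_of_le hmem.1 with h | h
      · exfalso; rw [← h] at heq; exact absurd (heq ▸ hlam.2) (lt_irrefl _)
      · exact h
    · rcases eq_or_lt_of_le hmem.2 with h | h
      · exfalso; rw [h] at heq; exact absurd (heq ▸ hlam.1) (lt_irrefl _)
      · exact h
  refine ⟨f, hval, ?_, ?_⟩
  · rw [Metric.continuousOn_iff]
    intro lam hlam ε hε
    obtain ⟨⟨hp1, hq1⟩, hVeq⟩ := hval lam hlam
    set x₀ := f lam with hx₀
    set ε' := min (ε/2) (min (x₀ - p) (q - x₀)) with hε'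
    have hε'pos : 0 < ε' := lt_min (by linarith) (lt_min (by linarith) (by linarith))
    have hε'le : ε' ≤ ε/2 := min_le_left _ _
    have h1 : p ≤ x₀ - ε' := by
      have : ε' ≤ x₀ - p := le_trans (min_le_right _ _) (min_le_left _ _)
      linarith
    have h2 : x₀ + ε' ≤ q := by
      have : ε' ≤ q - x₀ := le_trans (min_le_right _ _) (min_le_right _ _)
      linarith
    have hx₀m : x₀ ∈ Set.Icc p q := ⟨hp1.le, hq1.le⟩
    have hVlt : V (x₀ + ε') < lam := by
      rw [← hVeq]
      exact hanti hx₀m ⟨by linarith, h2⟩ (by linarith)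
    have hVgt : lam < V (x₀ - ε') := by
      rw [← hVeq]
      exact hanti ⟨h1, by linarith⟩ hx₀m (by linarith)
    set η := min (V (x₀ - ε') - lam) (lam - V (x₀ + ε')) with hη
    have hηpos : 0 < η := lt_min (by linarith) (by linarith)
    refine ⟨η, hηpos, ?_⟩
    intro mu hmu hdist
    obtain ⟨⟨hp2, hq2⟩, hVmu⟩ := hval mu hmu
    rw [Real.dist_eq] at hdist ⊢
    have hd1 : mu < lam + η := by
      have := abs_lt.1 hdist; linarith [this.2]
    have hd2 : lam - η < mu := by
      have := abs_lt.1 hdist; linarith [this.1]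
    have hc1 : x₀ - ε' < f mu := by
      by_contra hcon
      push_neg at hcon
      have : V (x₀ - ε') ≤ V (f mu) :=
        hanti.antitoneOn ⟨hp2.le, hq2.le⟩ ⟨h1, by linarith⟩ hcon
      rw [hVmu] at this
      have : V (x₀ - ε') - lam ≤ mu - lam := by linarith
      have hη1 : η ≤ V (x₀ - ε') - lam := min_le_left _ _
      linarith
    have hc2 : f mu < x₀ + ε' := by
      by_contra hcon
      push_neg at hcon
      have : V (f mu) ≤ V (x₀ + ε') :=
        hanti.antitoneOn ⟨by linarith, h2⟩ ⟨hp2.le, hq2.le⟩ hcon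
      rw [hVmu] at this
      have hη2 : η ≤ lam - V (x₀ + ε') := min_le_right _ _
      linarith
    rw [abs_lt]
    constructor <;> [linarith; linarith]
  · intro lam hlam x hx hVx
    have hex : ∃ x, x ∈ Set.Icc p q ∧ V x = lam := ⟨x, hx, hVx⟩
    simp only [hf, dif_pos hex]
    obtain ⟨hmem, heq⟩ := hex.choose_spec
    exact hanti.injOn hx hmem (by rw [hVx, heq])

/-- Differentiability of the action integral: under the two-turning-point assumptions on
`V` at energy `E`, for `λ` in a neighborhood of `E` the turning points `x₋(λ) < x₊(λ)`
exist (continuously in `λ`, with `x₋(E) = x₋`, `x₊(E) = x₊`) and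
`J(λ) = 2∫_{x₋(λ)}^{x₊(λ)} √(λ−V) dx` has derivative `J'(λ) = ∫_{x₋(λ)}^{x₊(λ)} dx/√(λ−V)`. -/
theorem stmt11 (V : ℝ → ℝ) (E xm xp : ℝ) (hxx : xm < xp)
    (hV : ContDiff ℝ 2 V) (hVm : V xm = E) (hVp : V xp = E)
    (hV'm : deriv V xm < 0) (hV'p : 0 < deriv V xp)
    (hpos : ∀ x, x ≠ xm → x ≠ xp → 0 < (V x - E) / ((x - xm) * (x - xp))) :
    ∃ Em Ep : ℝ, ∃ xmf xpf : ℝ → ℝ, Em < E ∧ E < Ep ∧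
      ContinuousOn xmf (Set.Ioo Em Ep) ∧ ContinuousOn xpf (Set.Ioo Em Ep) ∧
      xmf E = xm ∧ xpf E = xp ∧
      (∀ lam ∈ Set.Ioo Em Ep, V (xmf lam) = lam ∧ V (xpf lam) = lam ∧ xmf lam < xpf lam) ∧
      ∀ lam ∈ Set.Ioo Em Ep,
        HasDerivAt (fun mu => 2 * ∫ x in xmf mu..xpf mu, Real.sqrt (mu - V x))
          (∫ x in xmf lam..xpf lam, (Real.sqrt (lam - V x))⁻¹) lam := by
  classical
  have hVcont : Continuous V := hV.continuous
  have hV'cont : Continuous (deriv V) := hV.continuous_deriv one_le_two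
  have hdiff : ∀ t : ℝ, HasDerivAt V (deriv V t) t := fun t =>
    ((hV.differentiable two_ne_zero) t).hasDerivAt
  -- sign facts from hpos
  have hVlt : ∀ x, xm < x → x < xp → V x < E := by
    intro x h1 h2
    have hp := hpos x (ne_of_gt h1) (ne_of_lt h2)
    rcases div_pos_iff.1 hp with ⟨_, hden⟩ | ⟨hnum, _⟩
    · exact absurd hden (by nlinarith)
    · linarith
  have hVgt : ∀ x, x < xm ∨ xp < x → E < V x := by
    intro x hx
    have hne1 : x ≠ xm := by rcases hx with h | h <;> [exact ne_of_lt h; exact ne_of_gt (by linarith)]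
    have hne2 : x ≠ xp := by rcases hx with h | h <;> [exact ne_of_lt (by linarith); exact ne_of_gt h]
    have hp := hpos x hne1 hne2
    rcases div_pos_iff.1 hp with ⟨hnum, _⟩ | ⟨_, hden⟩
    · linarith
    · exfalso
      rcases hx with h | h <;> nlinarith
  -- the uniform derivative bound c and the interval radius δ
  set c := min (-deriv V xm) (deriv V xp) / 2 with hc
  have hcm : c ≤ -deriv V xm / 2 := by
    have := min_le_left (-deriv V xm) (deriv V xp); rw [hc]; linarith
  have hcp : c ≤ deriv V xp / 2 := by
    have := min_le_right (-deriv V xm) (deriv V xp); rw [hc]; linarith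
  have hcpos : 0 < c := by
    rw [hc]; have := lt_min (show (0:ℝ) < -deriv V xm by linarith) hV'p; linarith
  have hm1 : ∀ᶠ x in nhds xm, deriv V x < -c :=
    Filter.Tendsto.eventually_lt_const (by linarith) (hV'cont.tendsto xm)
  have hm2 : ∀ᶠ x in nhds xp, c < deriv V x :=
    Filter.Tendsto.eventually_const_lt (by linarith) (hV'cont.tendsto xp)
  obtain ⟨δ₁, hδ₁pos, hδ₁⟩ := Metric.eventually_nhds_iff.1 hm1
  obtain ⟨δ₂, hδ₂pos, hδ₂⟩ := Metric.eventually_nhds_iff.1 hm2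
  set δ := min (min δ₁ δ₂) ((xp - xm) / 2) / 2 with hδ
  have hδpos : 0 < δ := by
    rw [hδ]
    have := lt_min (lt_min hδ₁pos hδ₂pos) (show (0:ℝ) < (xp - xm)/2 by linarith)
    linarith
  have hδ1 : δ < δ₁ := by
    have h1 := min_le_left (min δ₁ δ₂) ((xp - xm)/2)
    have h2 := min_le_left δ₁ δ₂
    rw [hδ]; linarith
  have hδ2 : δ < δ₂ := by
    have h1 := min_le_left (min δ₁ δ₂) ((xp - xm)/2)
    have h2 := min_le_right δ₁ δ₂
    rw [hδ]; linarith
  have hδ3 : 2 * δ < xp - xm := by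
    have h1 := min_le_right (min δ₁ δ₂) ((xp - xm)/2)
    rw [hδ]; linarith
  -- derivative bounds on the turning-point intervals
  have hderm : ∀ t ∈ Set.Icc (xm - δ) (xm + δ), deriv V t ≤ -c := by
    intro t ht
    refine (hδ₁ ?_).le
    rw [Real.dist_eq, abs_lt]
    constructor <;> [linarith [ht.1]; linarith [ht.2]]
  have hderp : ∀ t ∈ Set.Icc (xp - δ) (xp + δ), c ≤ deriv V t := by
    intro t ht
    refine (hδ₂ ?_).le
    rw [Real.dist_eq, abs_lt]
    constructor <;> [linarith [ht.1]; linarith [ht.2]]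
  have hanti : StrictAntiOn V (Set.Icc (xm - δ) (xm + δ)) := by
    apply strictAntiOn_of_deriv_neg (convex_Icc _ _) hVcont.continuousOn
    intro x hx
    rw [interior_Icc] at hx
    have := hderm x (Set.Ioo_subset_Icc_self hx)
    linarith
  have hmono : StrictMonoOn V (Set.Icc (xp - δ) (xp + δ)) := by
    apply strictMonoOn_of_deriv_pos (convex_Icc _ _) hVcont.continuousOn
    intro x hx
    rw [interior_Icc] at hx
    have := hderp x (Set.Ioo_subset_Icc_self hx)
    linarith
  -- maximum of V on the middle interval
  have hI2le : xm + δ ≤ xp - δ := by linarith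
  obtain ⟨x₀, hx₀mem, hx₀max⟩ := isCompact_Icc.exists_isMaxOn
    (Set.nonempty_Icc.2 hI2le) (hVcont.continuousOn (s := Set.Icc (xm + δ) (xp - δ)))
  set Em := V x₀ with hEm
  have hEmE : Em < E := hVlt x₀ (by linarith [hx₀mem.1]) (by linarith [hx₀mem.2])
  set Ep := min (V (xm - δ)) (V (xp + δ)) with hEp
  have hEEp : E < Ep := lt_min (hVgt _ (Or.inl (by linarith))) (hVgt _ (Or.inr (by linarith)))
  -- the left turning point function
  have hsub1 : Set.Ioo Em Ep ⊆ Set.Ioo (V (xm + δ)) (V (xm - δ)) := by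
    intro lam hlam
    exact ⟨lt_of_le_of_lt (hx₀max ⟨le_refl _, hI2le⟩) hlam.1,
      lt_of_lt_of_le hlam.2 (min_le_left _ _)⟩
  obtain ⟨xmf, hxmfval, hxmfcont, hxmfuniq⟩ :=
    inv_pack V hVcont (by linarith : xm - δ ≤ xm + δ) hanti
  -- the right turning point function, via reflection
  set W : ℝ → ℝ := fun x => V (2 * xp - x) with hW
  have hWcont : Continuous W := hVcont.comp (continuous_const.sub continuous_id)
  have hrefl : ∀ x, x ∈ Set.Icc (xp - δ) (xp + δ) → 2 * xp - x ∈ Set.Icc (xp - δ) (xp + δ) := by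
    intro x hx
    exact ⟨by linarith [hx.2], by linarith [hx.1]⟩
  have hWanti : StrictAntiOn W (Set.Icc (xp - δ) (xp + δ)) := by
    intro x hx y hy hxy
    exact hmono (hrefl y hy) (hrefl x hx) (by linarith)
  have hWq : W (xp + δ) = V (xp - δ) := by
    show V (2 * xp - (xp + δ)) = V (xp - δ); congr 1; ring
  have hWp : W (xp - δ) = V (xp + δ) := by
    show V (2 * xp - (xp - δ)) = V (xp + δ); congr 1; ring
  have hsub2 : Set.Ioo Em Ep ⊆ Set.Ioo (W (xp + δ)) (W (xp - δ)) := by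
    rw [hWq, hWp]
    intro lam hlam
    exact ⟨lt_of_le_of_lt (hx₀max ⟨hI2le, le_refl _⟩) hlam.1,
      lt_of_lt_of_le hlam.2 (min_le_right _ _)⟩
  obtain ⟨g, hgval, hgcont, hguniq⟩ :=
    inv_pack W hWcont (by linarith : xp - δ ≤ xp + δ) hWanti
  set xpf : ℝ → ℝ := fun lam => 2 * xp - g lam with hxpf
  have hxpfval : ∀ lam ∈ Set.Ioo Em Ep,
      xpf lam ∈ Set.Ioo (xp - δ) (xp + δ) ∧ V (xpf lam) = lam := by
    intro lam hlam
    obtain ⟨hmem, heq⟩ := hgval lam (hsub2 hlam)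
    refine ⟨⟨?_, ?_⟩, heq⟩
    · show xp - δ < 2 * xp - g lam; linarith [hmem.2]
    · show 2 * xp - g lam < xp + δ; linarith [hmem.1]
  have hxpfuniq : ∀ lam ∈ Set.Ioo Em Ep, ∀ x ∈ Set.Icc (xp - δ) (xp + δ),
      V x = lam → x = xpf lam := by
    intro lam hlam x hx hVx
    have hWx : W (2 * xp - x) = lam := by
      rw [hW]; show V (2*xp - (2*xp - x)) = lam; rw [show 2*xp - (2*xp - x) = x by ring, hVx]
    have := hguniq lam (hsub2 hlam) (2 * xp - x) (hrefl x hx) hWx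
    show x = 2 * xp - g lam; linarith
  -- E is in the window
  have hEmemEE : E ∈ Set.Ioo Em Ep := ⟨hEmE, hEEp⟩
  have hxmfE : xmf E = xm :=
    (hxmfuniq E (hsub1 hEmemEE) xm ⟨by linarith, by linarith⟩ hVm).symm
  have hxpfE : xpf E = xp :=
    (hxpfuniq E hEmemEE xp ⟨by linarith, by linarith⟩ hVp).symm
  refine ⟨Em, Ep, xmf, xpf, hEmE, hEEp, hxmfcont.mono hsub1,
    (continuousOn_const.sub hgcont).mono hsub2, hxmfE, hxpfE, ?_, ?_⟩
  · intro lam hlam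
    obtain ⟨hmem1, heq1⟩ := hxmfval lam (hsub1 hlam)
    obtain ⟨hmem2, heq2⟩ := hxpfval lam hlam
    exact ⟨heq1, heq2, by linarith [hmem1.2, hmem2.1]⟩
  · intro lam hlam
    obtain ⟨hamem, haval⟩ := hxmfval lam (hsub1 hlam)
    obtain ⟨hbmem, hbval⟩ := hxpfval lam hlam
    set A := xm - δ with hA
    set B := xp + δ with hB
    set a := xmf lam with ha
    set b := xpf lam with hb
    have hAa : A < a := hamem.1
    have haa1 : a < xm + δ := hamem.2
    have ha2b : xp - δ < b := hbmem.1
    have hbB : b < B := hbmem.2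
    have hab : a < b := by linarith
    have hAB : A ≤ B := by linarith
    -- sign facts
    have sgn1 : ∀ mu ∈ Set.Ioo Em Ep, ∀ x ∈ Set.Icc A (xmf mu), mu ≤ V x := by
      intro mu hmu x hx
      obtain ⟨hm', hv'⟩ := hxmfval mu (hsub1 hmu)
      rw [← hv']
      exact hanti.antitoneOn ⟨hx.1, le_trans hx.2 hm'.2.le⟩ ⟨hm'.1.le, hm'.2.le⟩ hx.2
    have sgn2 : ∀ mu ∈ Set.Ioo Em Ep, ∀ x ∈ Set.Icc (xpf mu) B, mu ≤ V x := by
      intro mu hmu x hx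
      obtain ⟨hm', hv'⟩ := hxpfval mu hmu
      rw [← hv']
      exact hmono.monotoneOn ⟨hm'.1.le, hm'.2.le⟩ ⟨le_trans hm'.1.le hx.1, hx.2⟩ hx.1
    have sgn3 : ∀ x ∈ Set.Icc (xm + δ) (xp - δ), V x ≤ Em := fun x hx => hx₀max hx
    -- level set of lam inside [A,B] is {a, b}
    have hzero : ∀ x ∈ Set.Icc A B, V x = lam → x = a ∨ x = b := by
      intro x hx hVx
      rcases le_or_gt x (xm + δ) with h | h
      · exact Or.inl (hxmfuniq lam (hsub1 hlam) x ⟨hx.1, h⟩ hVx)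
      · rcases le_or_gt x (xp - δ) with h2 | h2
        · exfalso
          have h3 := sgn3 x ⟨h.le, h2⟩
          have h4 : V x < lam := lt_of_le_of_lt h3 hlam.1
          rw [hVx] at h4
          exact lt_irrefl _ h4
        · exact Or.inr (hxpfuniq lam hlam x ⟨h2.le, hx.2⟩ hVx)
    -- the dominating function
    set gbd : ℝ → ℝ := fun x => (Real.sqrt |lam - V x|)⁻¹ with hgbd
    have hgbdmeas : Measurable gbd :=
      ((Real.continuous_sqrt.comp ((continuous_const.sub hVcont).abs)).measurable).inv
    have hgbd_nonneg : ∀ x, 0 ≤ gbd x := fun x => inv_nonneg.2 (Real.sqrt_nonneg _)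
    -- integrability of the dominating function, piece by piece
    have hmvt1 : ∀ x ∈ Set.Ioc A (xm + δ), gbd x ≤ (Real.sqrt c)⁻¹ * (Real.sqrt |x - a|)⁻¹ := by
      intro x hx
      have hmvt := mvt_abs V hdiff (p := A) (q := xm + δ) (c := c)
        (fun t ht => le_abs.2 (Or.inr (by linarith [hderm t ht])))
        x ⟨hx.1.le, hx.2⟩ a ⟨hAa.le, haa1.le⟩
      have heqv : |V x - V a| = |lam - V x| := by
        rw [haval, abs_sub_comm]
      rcases eq_or_ne x a with heq' | hxa
      · rw [heq']
        simp [hgbd, haval, Real.sqrt_zero]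
      · have hpos' : 0 < c * |x - a| := mul_pos hcpos (abs_pos.2 (sub_ne_zero.2 hxa))
        have h1 : Real.sqrt (c * |x - a|) ≤ Real.sqrt |lam - V x| :=
          Real.sqrt_le_sqrt (by rw [← heqv]; exact hmvt)
        calc gbd x ≤ (Real.sqrt (c * |x - a|))⁻¹ :=
              inv_anti₀ (Real.sqrt_pos.2 hpos') h1
          _ = (Real.sqrt c)⁻¹ * (Real.sqrt |x - a|)⁻¹ := by
              rw [Real.sqrt_mul hcpos.le, mul_inv]
    have hmvt3 : ∀ x ∈ Set.Ioc (xp - δ) B, gbd x ≤ (Real.sqrt c)⁻¹ * (Real.sqrt |x - b|)⁻¹ := by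
      intro x hx
      have hmvt := mvt_abs V hdiff (p := xp - δ) (q := B) (c := c)
        (fun t ht => le_abs.2 (Or.inl (hderp t ht)))
        x ⟨hx.1.le, hx.2⟩ b ⟨ha2b.le, hbB.le⟩
      have heqv : |V x - V b| = |lam - V x| := by
        rw [hbval, abs_sub_comm]
      rcases eq_or_ne x b with heq' | hxb
      · rw [heq']
        simp [hgbd, hbval, Real.sqrt_zero]
      · have hpos' : 0 < c * |x - b| := mul_pos hcpos (abs_pos.2 (sub_ne_zero.2 hxb))
        have h1 : Real.sqrt (c * |x - b|) ≤ Real.sqrt |lam - V x| :=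
          Real.sqrt_le_sqrt (by rw [← heqv]; exact hmvt)
        calc gbd x ≤ (Real.sqrt (c * |x - b|))⁻¹ :=
              inv_anti₀ (Real.sqrt_pos.2 hpos') h1
          _ = (Real.sqrt c)⁻¹ * (Real.sqrt |x - b|)⁻¹ := by
              rw [Real.sqrt_mul hcpos.le, mul_inv]
    have hgbd_int : IntegrableOn gbd (Set.Ioc A B) := by
      have hsplit : Set.Ioc A B =
          (Set.Ioc A (xm + δ) ∪ Set.Ioc (xm + δ) (xp - δ)) ∪ Set.Ioc (xp - δ) B := by
        rw [Set.Ioc_union_Ioc_eq_Ioc (by linarith) hI2le,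
          Set.Ioc_union_Ioc_eq_Ioc (by linarith) (by linarith)]
      rw [hsplit]
      refine IntegrableOn.union (IntegrableOn.union ?_ ?_) ?_
      · refine Integrable.mono'
          (((integrable_inv_sqrt_abs a A (xm + δ)).1).const_mul ((Real.sqrt c)⁻¹))
          hgbdmeas.aestronglyMeasurable ?_
        refine (ae_restrict_iff' measurableSet_Ioc).2 (Filter.Eventually.of_forall fun x hx => ?_)
        rw [Real.norm_eq_abs, abs_of_nonneg (hgbd_nonneg x)]
        exact hmvt1 x hx
      · have hlEm : 0 < lam - Em := by linarith [hlam.1]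
        refine Integrable.mono'
          ((integrableOn_const_iff (C := (Real.sqrt (lam - Em))⁻¹)).2 (Or.inr measure_Ioc_lt_top))
          hgbdmeas.aestronglyMeasurable ?_
        refine (ae_restrict_iff' measurableSet_Ioc).2 (Filter.Eventually.of_forall fun x hx => ?_)
        rw [Real.norm_eq_abs, abs_of_nonneg (hgbd_nonneg x)]
        have h3 := sgn3 x ⟨hx.1.le, hx.2⟩
        have h1 : lam - Em ≤ |lam - V x| := by
          rw [abs_of_nonneg (by linarith)]
          linarith
        exact inv_anti₀ (Real.sqrt_pos.2 hlEm) (Real.sqrt_le_sqrt h1)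
      · refine Integrable.mono'
          (((integrable_inv_sqrt_abs b (xp - δ) B).1).const_mul ((Real.sqrt c)⁻¹))
          hgbdmeas.aestronglyMeasurable ?_
        refine (ae_restrict_iff' measurableSet_Ioc).2 (Filter.Eventually.of_forall fun x hx => ?_)
        rw [Real.norm_eq_abs, abs_of_nonneg (hgbd_nonneg x)]
        exact hmvt3 x hx
    -- almost everywhere, V x ≠ lam
    have haeV : ∀ᵐ x ∂(volume.restrict (Set.Ioc A B)), V x ≠ lam := by
      refine (ae_restrict_iff' measurableSet_Ioc).2 ?_
      have hnull : volume ({a, b} : Set ℝ) = 0 :=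
        (Set.toFinite ({a, b} : Set ℝ)).measure_zero volume
      have hae0 : ∀ᵐ x : ℝ ∂volume, ¬(x = a ∨ x = b) := by
        have hseteq : {x : ℝ | ¬¬(x = a ∨ x = b)} = {a, b} := by
          ext x
          simp only [Set.mem_setOf_eq, not_not, Set.mem_insert_iff, Set.mem_singleton_iff]
        rw [ae_iff, hseteq]
        exact hnull
      filter_upwards [hae0] with x hx hxmem hVx
      exact hx (hzero x (Set.Ioc_subset_Icc_self hxmem) hVx)
    -- the fixed-endpoint integral
    set Fm : ℝ → ℝ := fun mu => ∫ x in A..B, Real.sqrt (mu - V x) with hFmdef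
    have hcont' : ∀ mu : ℝ, Continuous (fun x => Real.sqrt (mu - V x)) :=
      fun mu => Real.continuous_sqrt.comp (continuous_const.sub hVcont)
    have hintc : ∀ mu u v : ℝ, IntervalIntegrable (fun x => Real.sqrt (mu - V x)) volume u v :=
      fun mu u v => (hcont' mu).intervalIntegrable u v
    have heqF : ∀ mu ∈ Set.Ioo Em Ep,
        2 * ∫ x in xmf mu..xpf mu, Real.sqrt (mu - V x) = 2 * Fm mu := by
      intro mu hmu
      obtain ⟨hm1', hv1'⟩ := hxmfval mu (hsub1 hmu)
      obtain ⟨hm2', hv2'⟩ := hxpfval mu hmu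
      have hz1 : (∫ x in A..xmf mu, Real.sqrt (mu - V x)) = 0 := by
        have heqz : Set.EqOn (fun x => Real.sqrt (mu - V x)) (fun _ => (0:ℝ))
            (Set.uIcc A (xmf mu)) := by
          intro x hx
          rw [Set.uIcc_of_le hm1'.1.le] at hx
          exact Real.sqrt_eq_zero'.2 (by linarith [sgn1 mu hmu x hx])
        rw [intervalIntegral.integral_congr heqz]
        simp
      have hz2 : (∫ x in xpf mu..B, Real.sqrt (mu - V x)) = 0 := by
        have heqz : Set.EqOn (fun x => Real.sqrt (mu - V x)) (fun _ => (0:ℝ))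
            (Set.uIcc (xpf mu) B) := by
          intro x hx
          rw [Set.uIcc_of_le hm2'.2.le] at hx
          exact Real.sqrt_eq_zero'.2 (by linarith [sgn2 mu hmu x hx])
        rw [intervalIntegral.integral_congr heqz]
        simp
      have h1 : (∫ x in xmf mu..xpf mu, Real.sqrt (mu - V x))
          + (∫ x in xpf mu..B, Real.sqrt (mu - V x))
          = ∫ x in xmf mu..B, Real.sqrt (mu - V x) :=
        intervalIntegral.integral_add_adjacent_intervals (hintc mu _ _) (hintc mu _ _)
      have h2 : (∫ x in A..xmf mu, Real.sqrt (mu - V x))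
          + (∫ x in xmf mu..B, Real.sqrt (mu - V x)) = Fm mu :=
        intervalIntegral.integral_add_adjacent_intervals (hintc mu _ _) (hintc mu _ _)
      rw [hz1, zero_add] at h2
      rw [hz2, add_zero] at h1
      rw [← h2, ← h1]
    -- derivative of the fixed-endpoint integral
    set D : ℝ := ∫ x in Set.Ioc A B, (2 * Real.sqrt (lam - V x))⁻¹ with hD
    have hFderiv : HasDerivAt Fm D lam := by
      rw [hasDerivAt_iff_tendsto_slope]
      have hkey : Filter.Tendsto
          (fun mu => ∫ x in Set.Ioc A B, (Real.sqrt (mu - V x) - Real.sqrt (lam - V x)) / (mu - lam))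
          (nhdsWithin lam {lam}ᶜ) (nhds D) := by
        rw [hD]
        apply MeasureTheory.tendsto_integral_filter_of_dominated_convergence gbd
        · refine Filter.Eventually.of_forall fun mu => ?_
          exact (((hcont' mu).sub (hcont' lam)).div_const _).aestronglyMeasurable
        · filter_upwards [self_mem_nhdsWithin] with mu hmu
          have hne : mu - lam ≠ 0 := sub_ne_zero.2 hmu
          filter_upwards [haeV] with x hVx
          have hane : lam - V x ≠ 0 := sub_ne_zero.2 (Ne.symm hVx)
          have hbd := sqrt_slope_bound (a := lam - V x) (h := mu - lam) hane
          rw [show lam - V x + (mu - lam) = mu - V x by ring] at hbd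
          rw [norm_div, Real.norm_eq_abs, Real.norm_eq_abs,
            div_le_iff₀ (abs_pos.2 hne)]
          calc |Real.sqrt (mu - V x) - Real.sqrt (lam - V x)|
              ≤ |mu - lam| / Real.sqrt |lam - V x| := hbd
            _ = gbd x * |mu - lam| := by
                rw [div_eq_mul_inv, mul_comm]
        · exact hgbd_int
        · filter_upwards [haeV] with x hVx
          rcases hVx.lt_or_gt with hlt | hgt
          · -- V x < lam : genuine derivative of sqrt
            have hane : lam - V x ≠ 0 := ne_of_gt (by linarith)
            have hd : HasDerivAt (fun mu => Real.sqrt (mu - V x))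
                (1 / (2 * Real.sqrt (lam - V x))) lam := by
              have := (Real.hasDerivAt_sqrt hane).comp lam
                ((hasDerivAt_id lam).sub_const (V x))
              simpa [Function.comp_def] using this
            have := hasDerivAt_iff_tendsto_slope.1 hd
            rw [show (2 * Real.sqrt (lam - V x))⁻¹ = 1 / (2 * Real.sqrt (lam - V x)) by
              rw [one_div]]
            refine this.congr fun mu => ?_
            rw [slope_def_field]
          · -- lam < V x : eventually zero
            have hz : Real.sqrt (lam - V x) = 0 := Real.sqrt_eq_zero'.2 (by linarith)
            rw [hz, mul_zero, inv_zero]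
            have hev : ∀ᶠ mu in nhdsWithin lam {lam}ᶜ,
                (0:ℝ) = (Real.sqrt (mu - V x) - 0) / (mu - lam) := by
              apply eventually_nhdsWithin_of_eventually_nhds
              filter_upwards [Iio_mem_nhds hgt] with mu hmu
              rw [Real.sqrt_eq_zero'.2 (by linarith [Set.mem_Iio.1 hmu] : mu - V x ≤ 0)]
              simp
            exact Filter.Tendsto.congr' hev tendsto_const_nhds
      refine Filter.Tendsto.congr' ?_ hkey
      filter_upwards [self_mem_nhdsWithin] with mu hmu
      have hne : mu - lam ≠ 0 := sub_ne_zero.2 hmu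
      have hint1 : IntegrableOn (fun x => Real.sqrt (mu - V x)) (Set.Ioc A B) :=
        (hintc mu A B).1
      have hint2 : IntegrableOn (fun x => Real.sqrt (lam - V x)) (Set.Ioc A B) :=
        (hintc lam A B).1
      simp only [slope_def_field, hFmdef]
      rw [intervalIntegral.integral_of_le hAB, intervalIntegral.integral_of_le hAB,
        ← MeasureTheory.integral_sub hint1 hint2, ← integral_div]
    -- conclude
    have h2F : HasDerivAt (fun mu => 2 * Fm mu) (2 * D) lam := hFderiv.const_mul 2
    have hfinal : HasDerivAt
        (fun mu => 2 * ∫ x in xmf mu..xpf mu, Real.sqrt (mu - V x)) (2 * D) lam := by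
      apply h2F.congr_of_eventuallyEq
      filter_upwards [Ioo_mem_nhds hlam.1 hlam.2] with mu hmu
      exact heqF mu hmu
    -- identify 2 * D with the target integral
    have hint_main : IntegrableOn (fun x => (Real.sqrt (lam - V x))⁻¹) (Set.Ioc A B) := by
      refine Integrable.mono' hgbd_int
        ((Real.continuous_sqrt.comp (continuous_const.sub hVcont)).measurable.inv).aestronglyMeasurable
        (Filter.Eventually.of_forall fun x => ?_)
      rw [Real.norm_eq_abs, abs_of_nonneg (inv_nonneg.2 (Real.sqrt_nonneg _))]
      show (Real.sqrt (lam - V x))⁻¹ ≤ (Real.sqrt |lam - V x|)⁻¹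
      rcases le_or_gt (V x) lam with h | h
      · rw [abs_of_nonneg (by linarith : (0:ℝ) ≤ lam - V x)]
      · rw [Real.sqrt_eq_zero'.2 (by linarith : lam - V x ≤ 0), inv_zero]
        positivity
    have hEqOn1 : Set.EqOn (fun x => (Real.sqrt (lam - V x))⁻¹) 0 (Set.Ioc A a) := by
      intro x hx
      have := sgn1 lam hlam x ⟨hx.1.le, hx.2⟩
      show (Real.sqrt (lam - V x))⁻¹ = 0
      rw [Real.sqrt_eq_zero'.2 (by linarith : lam - V x ≤ 0), inv_zero]
    have hEqOn3 : Set.EqOn (fun x => (Real.sqrt (lam - V x))⁻¹) 0 (Set.Ioc b B) := by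
      intro x hx
      have := sgn2 lam hlam x ⟨hx.1.le, hx.2⟩
      show (Real.sqrt (lam - V x))⁻¹ = 0
      rw [Real.sqrt_eq_zero'.2 (by linarith : lam - V x ≤ 0), inv_zero]
    have hDval : 2 * D = ∫ x in xmf lam..xpf lam, (Real.sqrt (lam - V x))⁻¹ := by
      have h2D : 2 * D = ∫ x in Set.Ioc A B, (Real.sqrt (lam - V x))⁻¹ := by
        rw [hD, ← integral_const_mul]
        congr 1
        funext x
        rcases eq_or_ne (Real.sqrt (lam - V x)) 0 with h | h
        · rw [h]; simp
        · field_simp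
      have hu1 : Set.Ioc A b = Set.Ioc A a ∪ Set.Ioc a b :=
        (Set.Ioc_union_Ioc_eq_Ioc hAa.le hab.le).symm
      have hu2 : Set.Ioc A B = Set.Ioc A b ∪ Set.Ioc b B :=
        (Set.Ioc_union_Ioc_eq_Ioc (by linarith) hbB.le).symm
      rw [h2D, hu2, MeasureTheory.setIntegral_union (Set.Ioc_disjoint_Ioc_of_le le_rfl) measurableSet_Ioc
          (hint_main.mono_set (by rw [hu2]; exact Set.subset_union_left))
          (hint_main.mono_set (by rw [hu2]; exact Set.subset_union_right)),
        hu1, MeasureTheory.setIntegral_union (Set.Ioc_disjoint_Ioc_of_le le_rfl) measurableSet_Ioc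
          (hint_main.mono_set (fun x hx => by
            rw [hu2, hu1]; exact Set.mem_union_left _ (Set.mem_union_left _ hx)))
          (hint_main.mono_set (fun x hx => by
            rw [hu2, hu1]; exact Set.mem_union_left _ (Set.mem_union_right _ hx)))]
      rw [MeasureTheory.setIntegral_congr_fun measurableSet_Ioc hEqOn1,
        MeasureTheory.setIntegral_congr_fun measurableSet_Ioc hEqOn3]
      simp only [MeasureTheory.integral_zero, Pi.zero_apply]
      rw [intervalIntegral.integral_of_le hab.le]
      simp
    rw [← hDval]
    exact hfinal
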